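/- arXiv:2107.13915 — 4 statements merged into one kernel-verified Lean document; each statement's English description precedes it below -/
import Mathlib

section
/- The field of straightedge-and-compass constructible real numbers is real quadratically closed but not real closed. -/
open IntermediateField Polynomial

/-- Towers of quadratic extensions of `ℚ` inside `ℝ`. -/
inductive IsQuadTower : IntermediateField ℚ ℝ → Prop
  | bot : IsQuadTower ⊥
  | step (L : IntermediateField ℚ ℝ) (a : ℝ) : IsQuadTower L → a ^ 2 ∈ L →
      IsQuadTower (L ⊔ IntermediateField.adjoin ℚ {a})

theorem IsQuadTower.finrank {L : IntermediateField ℚ ℝ} (h : IsQuadTower L) :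
    ∃ n : ℕ, FiniteDimensional ℚ L ∧ Module.finrank ℚ L = 2 ^ n := by
  induction h with
  | bot => exact ⟨0, inferInstance, by simp⟩
  | step L a hL ha ih =>
    obtain ⟨n, hfd, hrank⟩ := ih
    have hint : IsIntegral L a := by
      refine ⟨X ^ 2 - C ⟨a ^ 2, ha⟩, monic_X_pow_sub_C _ (by norm_num), ?_⟩
      simp [sub_eq_zero]
    have hfd2 : FiniteDimensional L (IntermediateField.adjoin L {a}) :=
      IntermediateField.adjoin.finiteDimensional hint
    have key : L ⊔ IntermediateField.adjoin ℚ {a}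
        = IntermediateField.restrictScalars ℚ (IntermediateField.adjoin L {a}) := by
      exact (IntermediateField.restrictScalars_adjoin_eq_sup (K := L) (S := {a})).symm
    have hdeg : Module.finrank L (IntermediateField.adjoin L {a}) ≤ 2 := by
      rw [IntermediateField.adjoin.finrank hint]
      have := Polynomial.natDegree_le_of_dvd
        (minpoly.dvd L a (p := X ^ 2 - C ⟨a ^ 2, ha⟩) (by simp [sub_eq_zero]))
        (by intro h; simpa using congrArg natDegree h)
      simpa using this
    have hpos : 0 < Module.finrank L (IntermediateField.adjoin L {a}) :=
      Module.finrank_pos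
    rw [key]
    have hfd3 : FiniteDimensional ℚ
        (IntermediateField.restrictScalars ℚ (IntermediateField.adjoin L {a})) := by
      exact FiniteDimensional.trans ℚ L (IntermediateField.adjoin L {a})
    have hmul : Module.finrank ℚ
          (IntermediateField.restrictScalars ℚ (IntermediateField.adjoin L {a}))
        = Module.finrank ℚ L * Module.finrank L (IntermediateField.adjoin L {a}) :=
      (Module.finrank_mul_finrank ℚ L (IntermediateField.adjoin L {a})).symm
    interval_cases h2 : Module.finrank L (IntermediateField.adjoin L {a})
    · exact ⟨n, hfd3, by rw [hmul, hrank, mul_one]⟩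
    · exact ⟨n + 1, hfd3, by rw [hmul, hrank]; ring⟩

theorem IsQuadTower.sup {L₁ L₂ : IntermediateField ℚ ℝ} (h₁ : IsQuadTower L₁)
    (h₂ : IsQuadTower L₂) : IsQuadTower (L₁ ⊔ L₂) := by
  induction h₂ with
  | bot => simpa using h₁
  | step L a hL ha ih =>
    rw [← sup_assoc]
    exact IsQuadTower.step _ a ih (le_sup_right (α := IntermediateField ℚ ℝ) ha)

/-- The subfield of reals lying in some tower of quadratic extensions. -/
noncomputable def QuadClosure : Subfield ℝ where
  carrier := {x | ∃ L : IntermediateField ℚ ℝ, IsQuadTower L ∧ x ∈ L}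
  one_mem' := ⟨⊥, .bot, one_mem ⊥⟩
  zero_mem' := ⟨⊥, .bot, zero_mem ⊥⟩
  add_mem' := by
    rintro x y ⟨L₁, h₁, hx⟩ ⟨L₂, h₂, hy⟩
    exact ⟨L₁ ⊔ L₂, h₁.sup h₂, add_mem (le_sup_left (α := IntermediateField ℚ ℝ) hx)
      (le_sup_right (α := IntermediateField ℚ ℝ) hy)⟩
  mul_mem' := by
    rintro x y ⟨L₁, h₁, hx⟩ ⟨L₂, h₂, hy⟩
    exact ⟨L₁ ⊔ L₂, h₁.sup h₂, mul_mem (le_sup_left (α := IntermediateField ℚ ℝ) hx)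
      (le_sup_right (α := IntermediateField ℚ ℝ) hy)⟩
  neg_mem' := by
    rintro x ⟨L, h, hx⟩
    exact ⟨L, h, neg_mem hx⟩
  inv_mem' := by
    rintro x ⟨L, h, hx⟩
    exact ⟨L, h, inv_mem hx⟩

theorem no_rat_cube_root_two (b : ℚ) : b ^ 3 ≠ 2 := by
  intro hb
  have hb0 : b ≠ 0 := by rintro rfl; norm_num at hb
  have h1 : padicValRat 2 (b ^ 3) = 3 * padicValRat 2 b := padicValRat.pow b
  have h2 : padicValRat 2 (b ^ 3) = 1 := by rw [hb]; exact_mod_cast padicValRat.self (by norm_num)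
  omega

/-- The field of straightedge-and-compass constructible real numbers:
the smallest subfield of `ℝ` closed under taking square roots of positive elements. -/
noncomputable def ConstructibleReals : Subfield ℝ :=
  sInf {K : Subfield ℝ | ∀ x ∈ K, 0 < x → Real.sqrt x ∈ K}

theorem quadClosure_mem : QuadClosure ∈ {K : Subfield ℝ | ∀ x ∈ K, 0 < x → Real.sqrt x ∈ K} := by
  rintro x ⟨L, h, hx⟩ hpos
  refine ⟨L ⊔ IntermediateField.adjoin ℚ {Real.sqrt x},
    IsQuadTower.step L (Real.sqrt x) h (by rwa [Real.sq_sqrt hpos.le]),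
    le_sup_right (α := IntermediateField ℚ ℝ) (IntermediateField.subset_adjoin ℚ _ rfl)⟩

theorem no_constructible_cube_root_two (c : ℝ) (hc : c ∈ ConstructibleReals)
    (h3 : c ^ 3 = 2) : False := by
  have hle : ConstructibleReals ≤ QuadClosure := sInf_le quadClosure_mem
  obtain ⟨L, hL, hcL⟩ := hle hc
  obtain ⟨n, hfd, hrank⟩ := hL.finrank
  set x : L := ⟨c, hcL⟩ with hx
  have hint : IsIntegral ℚ x := IsIntegral.of_finite ℚ x
  have hirr : Irreducible (X ^ 3 - C (2 : ℚ)) :=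
    X_pow_sub_C_irreducible_of_prime (a := (2 : ℚ)) Nat.prime_three no_rat_cube_root_two
  have hmin : minpoly ℚ x = X ^ 3 - C (2 : ℚ) := by
    have hx3 : x ^ 3 = (2 : L) := by
      ext; push_cast; exact h3
    exact (minpoly.eq_of_irreducible_of_monic hirr (by simp [sub_eq_zero, hx3])
      (monic_X_pow_sub_C _ (by norm_num))).symm
  have hdvd : (minpoly ℚ x).natDegree ∣ Module.finrank ℚ L := minpoly.degree_dvd hint
  rw [hmin, hrank] at hdvd
  simp only [natDegree_X_pow_sub_C] at hdvd
  have := Nat.Prime.dvd_of_dvd_pow (p := 3) Nat.prime_three hdvd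
  omega

/-- The field of constructible real numbers is real quadratically closed
(every positive element has a square root) but not real closed
(some odd degree polynomial has no root). -/
theorem constructibleReals_realQuadraticallyClosed_not_realClosed :
    (∀ x : ConstructibleReals, 0 < x → ∃ y : ConstructibleReals, y ^ 2 = x) ∧
    ¬ (∀ p : Polynomial ConstructibleReals, Odd p.natDegree →
        ∃ r : ConstructibleReals, p.eval r = 0) := by
  constructor
  · intro x hx
    have hxR : (0 : ℝ) < (x : ℝ) := hx
    have hmem : Real.sqrt (x : ℝ) ∈ ConstructibleReals := by
      exact Subfield.mem_sInf.mpr fun K hK => hK x (Subfield.mem_sInf.mp x.2 K hK) hxR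
    refine ⟨⟨Real.sqrt x, hmem⟩, ?_⟩
    ext
    push_cast
    exact Real.sq_sqrt hxR.le
  · intro h
    obtain ⟨r, hr⟩ := h (X ^ 3 - C (2 : ConstructibleReals))
      (by rw [natDegree_X_pow_sub_C]; exact ⟨1, rfl⟩)
    simp only [eval_sub, eval_pow, eval_X, eval_C, sub_eq_zero] at hr
    exact no_constructible_cube_root_two r r.2 (by have := Subtype.ext_iff.mp hr; push_cast at this; exact this)
end

section
/- For a field F with at least 4 elements, the map λ from the pre-Bloch group P(F) to S²_ℤ(F^×) sending [x] to (1−x)∘x is a well-defined group homomorphism; that is, λ vanishes on each five-term relation R_{x,y}. -/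
open scoped TensorProduct

variable (F : Type) [Field F]

/-- `S²_ℤ(F^×)`: the quotient of `F^× ⊗_ℤ F^×` by the subgroup generated by the
elements `x ⊗ y + y ⊗ x`. -/
abbrev SymSq :=
  (Additive Fˣ ⊗[ℤ] Additive Fˣ) ⧸
    Submodule.span ℤ {t : Additive Fˣ ⊗[ℤ] Additive Fˣ |
      ∃ a b : Additive Fˣ, t = a ⊗ₜ[ℤ] b + b ⊗ₜ[ℤ] a}

/-- `x ∘ y`, the image of `x ⊗ y` in `S²_ℤ(F^×)`. -/
noncomputable def symb (x y : Fˣ) : SymSq F :=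
  Submodule.Quotient.mk (Additive.ofMul x ⊗ₜ[ℤ] Additive.ofMul y)

/-- The lift of the map `λ : [x] ↦ (1-x) ∘ x` to the free abelian group on `F`
(the generators of the pre-Bloch group `P(F)`). -/
noncomputable def lamFree [DecidableEq F] : (F →₀ ℤ) →ₗ[ℤ] SymSq F :=
  Finsupp.lsum ℤ fun x =>
    LinearMap.toSpanSingleton ℤ (SymSq F)
      (if h : x = 0 then 0 else if h1 : x = 1 then 0 else
        symb F (Units.mk0 (1 - x) (sub_ne_zero.mpr (Ne.symm h1))) (Units.mk0 x h))


lemma symb_mul_left (a b c : Fˣ) : symb F (a * b) c = symb F a c + symb F b c := by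
  unfold symb
  rw [show Additive.ofMul (a * b) = Additive.ofMul a + Additive.ofMul b from rfl,
    TensorProduct.add_tmul, Submodule.Quotient.mk_add]

lemma symb_mul_right (a b c : Fˣ) : symb F a (b * c) = symb F a b + symb F a c := by
  unfold symb
  rw [show Additive.ofMul (b * c) = Additive.ofMul b + Additive.ofMul c from rfl,
    TensorProduct.tmul_add, Submodule.Quotient.mk_add]

lemma symb_one_left (c : Fˣ) : symb F 1 c = 0 := by
  unfold symb
  rw [show Additive.ofMul (1 : Fˣ) = 0 from rfl, TensorProduct.zero_tmul,
    Submodule.Quotient.mk_zero]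

lemma symb_one_right (c : Fˣ) : symb F c 1 = 0 := by
  unfold symb
  rw [show Additive.ofMul (1 : Fˣ) = 0 from rfl, TensorProduct.tmul_zero,
    Submodule.Quotient.mk_zero]

lemma symb_inv_left (a c : Fˣ) : symb F a⁻¹ c = - symb F a c := by
  have h := symb_mul_left F a⁻¹ a c
  rw [inv_mul_cancel, symb_one_left] at h
  exact eq_neg_of_add_eq_zero_left h.symm

lemma symb_inv_right (a c : Fˣ) : symb F a c⁻¹ = - symb F a c := by
  have h := symb_mul_right F a c⁻¹ c
  rw [inv_mul_cancel, symb_one_right] at h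
  exact eq_neg_of_add_eq_zero_left h.symm

lemma symb_swap (a b : Fˣ) : symb F a b = - symb F b a := by
  have h : symb F b a + symb F a b = 0 := by
    unfold symb
    rw [← Submodule.Quotient.mk_add, Submodule.Quotient.mk_eq_zero]
    exact Submodule.subset_span ⟨Additive.ofMul b, Additive.ofMul a, rfl⟩
  exact eq_neg_of_add_eq_zero_right h

lemma lamFree_single [DecidableEq F] (z : F) (h0 : z ≠ 0) (h1 : z ≠ 1) :
    lamFree F (Finsupp.single z 1) =
      symb F (Units.mk0 (1 - z) (sub_ne_zero.mpr (Ne.symm h1))) (Units.mk0 z h0) := by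
  simp [lamFree, h0, h1]

/-- For a field `F` with at least 4 elements, the map `λ : P(F) → S²_ℤ(F^×)`,
`[x] ↦ (1-x) ∘ x`, is well defined: its lift to the free abelian group on the generators
vanishes on each five-term relation `R_{x,y}`. -/
theorem lam_vanishes_on_fiveTermRelations [DecidableEq F]
    (h4 : ∃ s : Finset F, 4 ≤ s.card)
    (x y : F) (hx0 : x ≠ 0) (hx1 : x ≠ 1) (hy0 : y ≠ 0) (hy1 : y ≠ 1) (hxy : x ≠ y) :
    lamFree F
      (Finsupp.single x 1 - Finsupp.single y 1 + Finsupp.single (y / x) 1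
        - Finsupp.single ((1 - x⁻¹) / (1 - y⁻¹)) 1
        + Finsupp.single ((1 - x) / (1 - y)) 1) = 0 := by
  have hsx : (1 : F) - x ≠ 0 := sub_ne_zero.mpr (Ne.symm hx1)
  have hsy : (1 : F) - y ≠ 0 := sub_ne_zero.mpr (Ne.symm hy1)
  have hd : x - y ≠ 0 := sub_ne_zero.mpr hxy
  have h30 : y / x ≠ 0 := div_ne_zero hy0 hx0
  have hx1' : x - 1 ≠ 0 := sub_ne_zero.mpr hx1
  have hy1' : y - 1 ≠ 0 := sub_ne_zero.mpr hy1
  have k1 : (1 : F) - x⁻¹ = (x - 1) * x⁻¹ := by field_simp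
  have k2 : (1 : F) - y⁻¹ = (y - 1) * y⁻¹ := by field_simp
  have h31 : y / x ≠ 1 := by
    intro h; rw [div_eq_one_iff_eq hx0] at h; exact hxy h.symm
  have hix : (1 : F) - x⁻¹ ≠ 0 := by
    rw [sub_ne_zero]; intro h; exact hx1 (by rw [← inv_inv x, ← h, inv_one])
  have hiy : (1 : F) - y⁻¹ ≠ 0 := by
    rw [sub_ne_zero]; intro h; exact hy1 (by rw [← inv_inv y, ← h, inv_one])
  have h40 : (1 - x⁻¹) / (1 - y⁻¹) ≠ 0 := div_ne_zero hix hiy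
  have h41 : (1 - x⁻¹) / (1 - y⁻¹) ≠ 1 := by
    intro h; rw [div_eq_one_iff_eq hiy] at h
    have hinv : x⁻¹ = y⁻¹ := by linear_combination -h
    exact hxy (inv_injective hinv)
  have h50 : (1 - x) / (1 - y) ≠ 0 := div_ne_zero hsx hsy
  have h51 : (1 - x) / (1 - y) ≠ 1 := by
    intro h; rw [div_eq_one_iff_eq hsy] at h
    exact hxy (by linear_combination -h)
  rw [map_add, map_sub, map_add, map_sub,
    lamFree_single F x hx0 hx1, lamFree_single F y hy0 hy1,
    lamFree_single F (y / x) h30 h31,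
    lamFree_single F ((1 - x⁻¹) / (1 - y⁻¹)) h40 h41,
    lamFree_single F ((1 - x) / (1 - y)) h50 h51]
  set U : Fˣ := Units.mk0 x hx0 with hU
  set V : Fˣ := Units.mk0 y hy0 with hV
  set S : Fˣ := Units.mk0 (1 - x) hsx with hS
  set T : Fˣ := Units.mk0 (1 - y) hsy with hT
  set D : Fˣ := Units.mk0 (x - y) hd with hD
  have e3a : Units.mk0 (1 - y / x) (sub_ne_zero.mpr (Ne.symm h31)) = D * U⁻¹ := by
    ext
    simp only [hD, hU, Units.val_mul, Units.val_inv_eq_inv_val, Units.val_mk0]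
    field_simp
  have e3b : Units.mk0 (y / x) h30 = V * U⁻¹ := by
    ext
    simp only [hV, hU, Units.val_mul, Units.val_inv_eq_inv_val, Units.val_mk0]
    rw [div_eq_mul_inv]
  have e4a : Units.mk0 (1 - (1 - x⁻¹) / (1 - y⁻¹)) (sub_ne_zero.mpr (Ne.symm h41)) =
      D * U⁻¹ * T⁻¹ := by
    ext
    simp only [hD, hU, hT, Units.val_mul, Units.val_inv_eq_inv_val, Units.val_mk0]
    rw [k1, k2]
    field_simp
    ring
  have e4b : Units.mk0 ((1 - x⁻¹) / (1 - y⁻¹)) h40 = S * V * T⁻¹ * U⁻¹ := by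
    ext
    simp only [hS, hV, hT, hU, Units.val_mul, Units.val_inv_eq_inv_val, Units.val_mk0]
    rw [k1, k2]
    field_simp
    ring
  have e5a : Units.mk0 (1 - (1 - x) / (1 - y)) (sub_ne_zero.mpr (Ne.symm h51)) = D * T⁻¹ := by
    ext
    simp only [hD, hT, Units.val_mul, Units.val_inv_eq_inv_val, Units.val_mk0]
    field_simp
    ring
  have e5b : Units.mk0 ((1 - x) / (1 - y)) h50 = S * T⁻¹ := by
    ext
    simp only [hS, hT, Units.val_mul, Units.val_inv_eq_inv_val, Units.val_mk0]
    rw [div_eq_mul_inv]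
  rw [e3a, e3b, e4a, e4b, e5a, e5b]
  simp only [symb_mul_left, symb_mul_right, symb_inv_left, symb_inv_right, neg_neg,
    neg_add_rev]
  rw [symb_swap F U S, symb_swap F U T, symb_swap F T S]
  abel
end

section
/- In the refined pre-Bloch group RP(F) of a field F, the elements ψ_i (i = 1,2) satisfy the cocycle identity ψ_i(xy) = ⟨x⟩ψ_i(y) + ψ_i(x) for all x, y ∈ F^×. -/
open scoped Classical

variable (F : Type) [Field F]

/-- The subgroup of squares in `F^×`. -/
def sqSubgroup : Subgroup Fˣ := MonoidHom.range (powMonoidHom 2 : Fˣ →* Fˣ)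

/-- The square class group `F^×/(F^×)²`. -/
def SqClassGroup : Type := Fˣ ⧸ sqSubgroup F

instance : CommGroup (SqClassGroup F) := inferInstanceAs (CommGroup (Fˣ ⧸ sqSubgroup F))

/-- The group ring `R_F = ℤ[F^×/(F^×)²]`. -/
abbrev GrpRing := MonoidAlgebra ℤ (SqClassGroup F)

/-- `⟨x⟩ ∈ R_F`, the square class of `x ∈ F^×` (with the junk convention `⟨0⟩ = 1`). -/
noncomputable def cls (x : F) : GrpRing F :=
  if h : x = 0 then 1
  else MonoidAlgebra.of ℤ (SqClassGroup F)
    (QuotientGroup.mk (Units.mk0 x h) : Fˣ ⧸ sqSubgroup F)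

/-- The relators of the refined pre-Bloch group: `[0]`, `[1]` and the refined five-term
relators `S_{x,y}`, inside the free `R_F`-module on the set `F` of generator labels. -/
noncomputable def refinedRels : Set (F →₀ GrpRing F) :=
  {Finsupp.single (0 : F) 1, Finsupp.single (1 : F) 1} ∪
  {z | ∃ x y : F, x ≠ 0 ∧ x ≠ 1 ∧ y ≠ 0 ∧ y ≠ 1 ∧ x ≠ y ∧
    z = Finsupp.single x 1 - Finsupp.single y 1
        + Finsupp.single (y / x) (cls F x)
        - Finsupp.single ((1 - x⁻¹) / (1 - y⁻¹)) (cls F (x⁻¹ - 1))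
        + Finsupp.single ((1 - x) / (1 - y)) (cls F (1 - x))}

/-- The refined pre-Bloch group `RP(F)`: the `R_F`-module with generators `[x]`, `x ∈ F^×`,
subject to `[1] = 0` and the refined five-term relations `S_{x,y}`. -/
abbrev RP := (F →₀ GrpRing F) ⧸ Submodule.span (GrpRing F) (refinedRels F)

/-- The generator `[x]` of `RP(F)`. -/
noncomputable def gen (x : F) : RP F :=
  Submodule.Quotient.mk (Finsupp.single x 1)

/-- `ψ₁(x) = [x] + ⟨-1⟩[x⁻¹]`. -/
noncomputable def psi1 (x : F) : RP F := gen F x + cls F (-1) • gen F x⁻¹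

/-- `ψ₂(x) = ⟨x⁻¹-1⟩[x] + ⟨1-x⟩[x⁻¹]` for `x ≠ 1`, and `ψ₂(1) = 0`. -/
noncomputable def psi2 (x : F) : RP F :=
  if x = 1 then 0 else cls F (x⁻¹ - 1) • gen F x + cls F (1 - x) • gen F x⁻¹


variable {F}

lemma gen_one : gen F 1 = 0 := by
  rw [gen, Submodule.Quotient.mk_eq_zero]
  exact Submodule.subset_span (Set.mem_union_left _ (by right; rfl))

lemma rel_S (x y : F) (hx0 : x ≠ 0) (hx1 : x ≠ 1) (hy0 : y ≠ 0) (hy1 : y ≠ 1)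
    (hxy : x ≠ y) :
    gen F x - gen F y + cls F x • gen F (y / x)
      - cls F (x⁻¹ - 1) • gen F ((1 - x⁻¹) / (1 - y⁻¹))
      + cls F (1 - x) • gen F ((1 - x) / (1 - y)) = 0 := by
  have hmem : (Finsupp.single x 1 - Finsupp.single y 1
        + Finsupp.single (y / x) (cls F x)
        - Finsupp.single ((1 - x⁻¹) / (1 - y⁻¹)) (cls F (x⁻¹ - 1))
        + Finsupp.single ((1 - x) / (1 - y)) (cls F (1 - x))) ∈
      Submodule.span (GrpRing F) (refinedRels F) :=
    Submodule.subset_span (Set.mem_union_right _ ⟨x, y, hx0, hx1, hy0, hy1, hxy, rfl⟩)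
  have h0 := (Submodule.Quotient.mk_eq_zero _).2 hmem
  have hrw : ∀ (t : F) (c : GrpRing F), Finsupp.single t c = c • Finsupp.single t 1 := by
    intro t c; rw [Finsupp.smul_single, smul_eq_mul, mul_one]
  rw [hrw (y/x), hrw ((1 - x⁻¹) / (1 - y⁻¹)), hrw ((1 - x) / (1 - y))] at h0
  simpa only [gen, Submodule.Quotient.mk_add, Submodule.Quotient.mk_sub,
    Submodule.Quotient.mk_smul] using h0

lemma cls_def' (x : F) (hx : x ≠ 0) : cls F x = MonoidAlgebra.of ℤ (SqClassGroup F)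
    (QuotientGroup.mk (Units.mk0 x hx) : Fˣ ⧸ sqSubgroup F) := dif_neg hx

lemma cls_mul (x y : F) (hx : x ≠ 0) (hy : y ≠ 0) :
    cls F (x * y) = cls F x * cls F y := by
  rw [cls_def' _ (mul_ne_zero hx hy), cls_def' _ hx, cls_def' _ hy]
  erw [← map_mul]
  congr 1
  erw [← QuotientGroup.mk_mul]
  congr 1
  ext
  simp

lemma cls_sq (x : F) : cls F x * cls F x = 1 := by
  by_cases hx : x = 0
  · simp [cls, hx]
  · rw [← cls_mul x x hx hx, cls_def' _ (mul_ne_zero hx hx)]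
    have h1 : (Units.mk0 (x*x) (mul_ne_zero hx hx)) = (Units.mk0 x hx)^2 := by ext; simp [sq]
    have h2 : (QuotientGroup.mk ((Units.mk0 x hx)^2) : Fˣ ⧸ sqSubgroup F) = 1 := by
      rw [QuotientGroup.eq_one_iff]
      exact ⟨Units.mk0 x hx, rfl⟩
    rw [h1, h2]; exact map_one _

lemma cls_eq_of_ratio (s t r : F) (ht : t ≠ 0) (hr : r ≠ 0) (h : s = t * r ^ 2) :
    cls F s = cls F t := by
  rw [h, sq, cls_mul t (r*r) ht (mul_ne_zero hr hr), cls_mul r r hr hr, cls_sq, mul_one]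

lemma cls_one : cls F (1 : F) = 1 := by
  have h1 := cls_sq (1 : F)
  have h2 := cls_mul (1 : F) 1 one_ne_zero one_ne_zero
  rw [mul_one] at h2
  rw [h2]; exact h1

lemma cls_inv (x : F) : cls F x⁻¹ = cls F x := by
  by_cases hx : x = 0
  · simp [hx]
  · exact cls_eq_of_ratio _ x x⁻¹ hx (inv_ne_zero hx) (by rw [sq]; field_simp)

lemma cls_mul_cls (a b : F) (ha : a ≠ 0) (hb : b ≠ 0) :
    cls F a * cls F b = cls F (a * b) := (cls_mul a b ha hb).symm


lemma psi1_generic (x y : F) (hx0 : x ≠ 0) (hx1 : x ≠ 1) (hy0 : y ≠ 0) (hy1 : y ≠ 1)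
    (hxy1 : x * y ≠ 1) :
    psi1 F (x * y) = cls F x • psi1 F y + psi1 F x := by
  have hxy0 : x * y ≠ 0 := mul_ne_zero hx0 hy0
  have hxxy : x ≠ x * y := by
    intro h; exact hy1 (mul_left_cancel₀ hx0 (by rw [mul_one, ← h])).symm
  have h1 := rel_S x (x*y) hx0 hx1 hxy0 hxy1 hxxy
  have h2 := rel_S x⁻¹ (x*y)⁻¹ (inv_ne_zero hx0) (by simp [hx1]) (inv_ne_zero hxy0)
    (by simp only [Ne, inv_eq_one]; exact hxy1) (by rw [Ne, inv_inj]; exact hxxy)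
  rw [show x*y/x = y by field_simp] at h1
  simp only [inv_inv] at h2
  rw [show (x*y)⁻¹/x⁻¹ = y⁻¹ by field_simp, cls_inv] at h2
  have e1 : cls F (-1) * cls F (x - 1) = cls F (1 - x) := by
    rw [cls_mul_cls _ _ (by norm_num) (sub_ne_zero.2 hx1),
      show (-1 : F) * (x - 1) = 1 - x by ring]
  have e2 : cls F (-1) * cls F (1 - x⁻¹) = cls F (x⁻¹ - 1) := by
    have hxi1 : (1:F) - x⁻¹ ≠ 0 := by
      rw [sub_ne_zero]; intro h; exact hx1 (by rw [← inv_inv x, ← h, inv_one])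
    rw [cls_mul_cls _ _ (by norm_num) hxi1,
      show (-1 : F) * (1 - x⁻¹) = x⁻¹ - 1 by ring]
  have key := congrArg (fun m => cls F (-1) • m) h2
  simp only [smul_add, smul_sub, smul_smul, smul_zero] at key
  rw [e1, e2] at key
  have h12 := congrArg₂ (· + ·) h1 key
  simp only [add_zero] at h12
  rw [psi1, psi1, psi1, eq_comm, ← sub_eq_zero, ← h12]
  module


lemma hc_gen (α β γ t r : F) (hα : α ≠ 0) (hβ : β ≠ 0) (hγ : γ ≠ 0) (ht : t ≠ 0)
    (hr : r ≠ 0) (h : α * (β * γ) = t * r ^ 2) :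
    cls F α * cls F β * cls F γ = cls F t := by
  rw [mul_assoc, cls_mul_cls β γ hβ hγ, cls_mul_cls α _ hα (mul_ne_zero hβ hγ)]
  exact cls_eq_of_ratio _ t r ht hr h

lemma psi2_generic (x y : F) (hx0 : x ≠ 0) (hx1 : x ≠ 1) (hy0 : y ≠ 0) (hy1 : y ≠ 1)
    (hxy1 : x * y ≠ 1) :
    psi2 F (x * y) = cls F x • psi2 F y + psi2 F x := by
  have he : y - 1 ≠ 0 := sub_ne_zero.2 hy1
  have hf : x - 1 ≠ 0 := sub_ne_zero.2 hx1
  have hd : x * y - 1 ≠ 0 := sub_ne_zero.2 hxy1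
  have hX0 : (y-1)/(x*y-1) ≠ 0 := div_ne_zero he hd
  have hX1 : (y-1)/(x*y-1) ≠ 1 := by
    intro h; rw [div_eq_one_iff_eq hd] at h
    have h' : (1:F) * y = x * y := by rw [one_mul]; linear_combination h
    exact hx1 (mul_right_cancel₀ hy0 h').symm
  have hY0 : x*(y-1)/(x*y-1) ≠ 0 := div_ne_zero (mul_ne_zero hx0 he) hd
  have hY1 : x*(y-1)/(x*y-1) ≠ 1 := by
    intro h; rw [div_eq_one_iff_eq hd] at h
    exact hx1 (by linear_combination -h)
  have hXY : (y-1)/(x*y-1) ≠ x*(y-1)/(x*y-1) := by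
    intro h; rw [div_eq_div_iff hd hd] at h
    have h' := mul_right_cancel₀ hd h
    exact hx1 (mul_right_cancel₀ he (by rw [one_mul]; exact h')).symm
  have h1 := rel_S ((y-1)/(x*y-1)) (x*(y-1)/(x*y-1)) hX0 hX1 hY0 hY1 hXY
  have h2 := rel_S (x*(y-1)/(x*y-1)) ((y-1)/(x*y-1)) hY0 hY1 hX0 hX1 (Ne.symm hXY)
  have u1 : 1 - ((y-1)/(x*y-1))⁻¹ = -(y*(x-1))/(y-1) := by
    rw [inv_div]; field_simp; ring
  have u2 : 1 - (x*(y-1)/(x*y-1))⁻¹ = -(x-1)/(x*(y-1)) := by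
    rw [inv_div]; field_simp; ring
  have u3 : 1 - (y-1)/(x*y-1) = y*(x-1)/(x*y-1) := by rw [eq_div_iff hd, sub_mul, div_mul_cancel₀ _ hd]; ring
  have u4 : 1 - x*(y-1)/(x*y-1) = (x-1)/(x*y-1) := by rw [eq_div_iff hd, sub_mul, div_mul_cancel₀ _ hd]; ring
  have a1 : x*(y-1)/(x*y-1) / ((y-1)/(x*y-1)) = x := by
    rw [div_div_div_eq]
    field_simp [he, hf, hd, hx0, hy0, sub_ne_zero]
  have a2 : (1 - ((y-1)/(x*y-1))⁻¹) / (1 - (x*(y-1)/(x*y-1))⁻¹) = x*y := by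
    rw [u1, u2, div_div_div_eq, div_eq_iff (mul_ne_zero he (neg_ne_zero.2 hf))]
    ring
  have a3 : (1 - (y-1)/(x*y-1)) / (1 - x*(y-1)/(x*y-1)) = y := by
    rw [u3, u4, div_div_div_eq]
    field_simp [he, hf, hd, hx0, hy0, sub_ne_zero]
    exact div_self (by rwa [mul_comm])
  have b1 : (y-1)/(x*y-1) / (x*(y-1)/(x*y-1)) = x⁻¹ := by
    rw [div_div_div_eq, inv_eq_one_div]
    field_simp [he, hf, hd, hx0, hy0, sub_ne_zero]
    exact div_self (by rwa [mul_comm])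
  have b2 : (1 - (x*(y-1)/(x*y-1))⁻¹) / (1 - ((y-1)/(x*y-1))⁻¹) = (x*y)⁻¹ := by
    rw [u2, u1, div_div_div_eq]
    field_simp [he, hf, hd, hx0, hy0, sub_ne_zero]
  have b3 : (1 - x*(y-1)/(x*y-1)) / (1 - (y-1)/(x*y-1)) = y⁻¹ := by
    rw [u4, u3, div_div_div_eq]
    field_simp [he, hf, hd, hx0, hy0, sub_ne_zero]
  have c1 : cls F ((y-1)/(x*y-1)) = cls F ((y-1)*(x*y-1)) :=
    cls_eq_of_ratio _ _ (x*y-1)⁻¹ (mul_ne_zero he hd) (inv_ne_zero hd) (by field_simp [he, hf, hd, hx0, hy0])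
  have c2 : cls F (((y-1)/(x*y-1))⁻¹ - 1) = cls F (y*(x-1)*(y-1)) :=
    cls_eq_of_ratio _ _ (y-1)⁻¹ (mul_ne_zero (mul_ne_zero hy0 hf) he) (inv_ne_zero he)
      (by rw [inv_div]; field_simp; ring)
  have c3 : cls F (1 - (y-1)/(x*y-1)) = cls F (y*(x-1)*(x*y-1)) :=
    cls_eq_of_ratio _ _ (x*y-1)⁻¹ (mul_ne_zero (mul_ne_zero hy0 hf) hd) (inv_ne_zero hd)
      (by rw [u3, inv_pow, ← div_eq_mul_inv, sq, ← div_div, mul_div_cancel_right₀ _ hd])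
  have c4 : cls F (x*(y-1)/(x*y-1)) = cls F (x*(y-1)*(x*y-1)) :=
    cls_eq_of_ratio _ _ (x*y-1)⁻¹ (mul_ne_zero (mul_ne_zero hx0 he) hd) (inv_ne_zero hd)
      (by field_simp [he, hf, hd, hx0, hy0])
  have c5 : cls F ((x*(y-1)/(x*y-1))⁻¹ - 1) = cls F (x*(x-1)*(y-1)) :=
    cls_eq_of_ratio _ _ (x*(y-1))⁻¹ (mul_ne_zero (mul_ne_zero hx0 hf) he)
      (inv_ne_zero (mul_ne_zero hx0 he)) (by rw [inv_div]; field_simp; ring)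
  have c6 : cls F (1 - x*(y-1)/(x*y-1)) = cls F ((x-1)*(x*y-1)) :=
    cls_eq_of_ratio _ _ (x*y-1)⁻¹ (mul_ne_zero hf hd) (inv_ne_zero hd)
      (by field_simp [he, hf, hd, hx0, hy0]; ring)
  rw [a1, a2, a3, c1, c2, c3] at h1
  rw [b1, b2, b3, c4, c5, c6] at h2
  have hα : (x*y)⁻¹ - 1 ≠ 0 := sub_ne_zero.2 (by rw [Ne, inv_eq_one]; exact hxy1)
  have hβ : y*(x-1)*(y-1) ≠ 0 := mul_ne_zero (mul_ne_zero hy0 hf) he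
  have hyi1 : y⁻¹ - 1 ≠ 0 := sub_ne_zero.2 (by rw [Ne, inv_eq_one]; exact hy1)
  have h1y : (1:F) - y ≠ 0 := sub_ne_zero.2 (Ne.symm hy1)
  have hd1 : cls F ((x*y)⁻¹ - 1) * cls F (y*(x-1)*(y-1)) * cls F (y*(x-1)*(y-1))
      = cls F ((x*y)⁻¹ - 1) :=
    hc_gen _ _ _ _ (y*(x-1)*(y-1)) hα hβ hβ hα hβ (by ring)
  have hd2 : cls F ((x*y)⁻¹ - 1) * cls F (y*(x-1)*(y-1)) * cls F (x*(x-1)*(y-1))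
      = cls F (1 - x*y) :=
    hc_gen _ _ _ _ ((x-1)*(y-1)) hα hβ (mul_ne_zero (mul_ne_zero hx0 hf) he)
      (sub_ne_zero.2 (Ne.symm hxy1)) (mul_ne_zero hf he) (by field_simp [he, hf, hd, hx0, hy0])
  have hd3 : cls F ((x*y)⁻¹ - 1) * cls F (y*(x-1)*(y-1)) * cls F ((y-1)*(x*y-1))
      = cls F (x⁻¹ - 1) :=
    hc_gen _ _ _ _ ((x*y-1)*(y-1)) hα hβ (mul_ne_zero he hd)
      (sub_ne_zero.2 (by rw [Ne, inv_eq_one]; exact hx1)) (mul_ne_zero hd he)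
      (by field_simp [he, hf, hd, hx0, hy0]; ring)
  have hd4 : cls F ((x*y)⁻¹ - 1) * cls F (y*(x-1)*(y-1)) * cls F (x*(y-1)*(x*y-1))
      = cls F (1 - x) :=
    hc_gen _ _ _ _ ((x*y-1)*(y-1)) hα hβ (mul_ne_zero (mul_ne_zero hx0 he) hd)
      (sub_ne_zero.2 (Ne.symm hx1)) (mul_ne_zero hd he) (by field_simp [he, hf, hd, hx0, hy0]; ring)
  have hd5 : cls F ((x*y)⁻¹ - 1) * cls F (y*(x-1)*(y-1)) * cls F (y*(x-1)*(x*y-1))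
      = cls F x * cls F (y⁻¹ - 1) := by
    rw [cls_mul_cls x _ hx0 hyi1]
    exact hc_gen _ _ _ _ ((x*y-1)*(x-1)*y/x) hα hβ (mul_ne_zero (mul_ne_zero hy0 hf) hd)
      (mul_ne_zero hx0 hyi1) (div_ne_zero (mul_ne_zero (mul_ne_zero hd hf) hy0) hx0)
      (by field_simp [he, hf, hd, hx0, hy0]; ring)
  have hd6 : cls F ((x*y)⁻¹ - 1) * cls F (y*(x-1)*(y-1)) * cls F ((x-1)*(x*y-1))
      = cls F x * cls F (1 - y) := by
    rw [cls_mul_cls x _ hx0 h1y]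
    exact hc_gen _ _ _ _ ((x*y-1)*(x-1)/x) hα hβ (mul_ne_zero hf hd)
      (mul_ne_zero hx0 h1y) (div_ne_zero (mul_ne_zero hd hf) hx0)
      (by field_simp [he, hf, hd, hx0, hy0]; ring)
  have h12 := congrArg₂ (· + ·) h1 h2
  simp only [add_zero] at h12
  have key := congrArg
    (fun m => (cls F ((x*y)⁻¹ - 1) * cls F (y*(x-1)*(y-1))) • m) h12
  simp only [smul_add, smul_sub, smul_smul, smul_zero] at key
  rw [hd1, hd2, hd3, hd4, hd5, hd6] at key
  rw [psi2, if_neg hxy1, psi2, if_neg hy1, psi2, if_neg hx1, eq_comm, ← sub_eq_zero, ← key]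
  module

lemma psi1_one : psi1 F 1 = 0 := by
  rw [psi1, inv_one, gen_one, smul_zero, add_zero]

lemma psi2_one : psi2 F 1 = 0 := by rw [psi2, if_pos rfl]

lemma cocycle_inv (f : F → RP F)
    (hco : ∀ a b : F, a ≠ 0 → a ≠ 1 → b ≠ 0 → b ≠ 1 → a * b ≠ 1 →
      f (a * b) = cls F a • f b + f a)
    (x z : F) (hx0 : x ≠ 0) (hx1 : x ≠ 1) (hz0 : z ≠ 0) (hz1 : z ≠ 1) (hzx : z ≠ x) :
    cls F x • f x⁻¹ + f x = 0 := by
  have hxz0 : x⁻¹ * z ≠ 0 := mul_ne_zero (inv_ne_zero hx0) hz0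
  have hxz1 : x⁻¹ * z ≠ 1 := by
    rw [Ne, inv_mul_eq_one₀ hx0]; exact fun h => hzx h.symm
  have h1 := hco x (x⁻¹*z) hx0 hx1 hxz0 hxz1
    (by rw [← mul_assoc, mul_inv_cancel₀ hx0, one_mul]; exact hz1)
  have h2 := hco x⁻¹ z (inv_ne_zero hx0) (by rw [Ne, inv_eq_one]; exact hx1) hz0 hz1 hxz1
  rw [show x * (x⁻¹*z) = z by field_simp, h2] at h1
  have h3 : f z = (cls F x * cls F x⁻¹) • f z + (cls F x • f x⁻¹ + f x) := by
    conv_lhs => rw [h1]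
    module
  rw [cls_inv, cls_sq, one_smul] at h3
  exact left_eq_add.mp h3

lemma exists_aux (h4 : ∃ s : Finset F, 4 ≤ s.card) (x : F) :
    ∃ z : F, z ≠ 0 ∧ z ≠ 1 ∧ z ≠ x := by
  obtain ⟨s, hs⟩ := h4
  by_contra hno
  push_neg at hno
  have hsub : s ⊆ {0, 1, x} := by
    intro t _
    simp only [Finset.mem_insert, Finset.mem_singleton]
    by_contra ht; push_neg at ht
    exact ht.2.2 (hno t ht.1 ht.2.1)
  have hle := Finset.card_le_card hsub
  have h3 : ({0, 1, x} : Finset F).card ≤ 3 := by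
    calc ({0, 1, x} : Finset F).card ≤ ({1, x} : Finset F).card + 1 :=
          Finset.card_insert_le _ _
    _ ≤ ({x} : Finset F).card + 1 + 1 := add_le_add_left (Finset.card_insert_le _ _) 1
    _ = 3 := by simp
  omega


variable (F)

/-- In the refined pre-Bloch group `RP(F)` of a field `F` with at least 4 elements,
the elements `ψᵢ` (i = 1,2) satisfy the cocycle identity
`ψᵢ(xy) = ⟨x⟩ψᵢ(y) + ψᵢ(x)` for all `x, y ∈ F^×`. -/
theorem psi_cocycle (h4 : ∃ s : Finset F, 4 ≤ s.card)
    (x y : F) (hx : x ≠ 0) (hy : y ≠ 0) :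
    psi1 F (x * y) = cls F x • psi1 F y + psi1 F x ∧
    psi2 F (x * y) = cls F x • psi2 F y + psi2 F x := by
  by_cases hx1 : x = 1
  · subst hx1
    refine ⟨?_, ?_⟩ <;> rw [one_mul, cls_one, one_smul]
    · rw [psi1_one, add_zero]
    · rw [psi2_one, add_zero]
  by_cases hy1 : y = 1
  · subst hy1
    refine ⟨?_, ?_⟩ <;> rw [mul_one]
    · rw [psi1_one, smul_zero, zero_add]
    · rw [psi2_one, smul_zero, zero_add]
  by_cases hxy1 : x * y = 1
  · have hyx : y = x⁻¹ := eq_inv_of_mul_eq_one_right hxy1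
    subst hyx
    obtain ⟨z, hz0, hz1, hzx⟩ := exists_aux h4 x
    rw [mul_inv_cancel₀ hx]
    refine ⟨?_, ?_⟩
    · rw [psi1_one]
      exact (cocycle_inv (psi1 F) (fun a b => psi1_generic a b) x z hx hx1 hz0 hz1 hzx).symm
    · rw [psi2_one]
      exact (cocycle_inv (psi2 F) (fun a b => psi2_generic a b) x z hx hx1 hz0 hz1 hzx).symm
  · exact ⟨psi1_generic x y hx hx1 hy hy1 hxy1, psi2_generic x y hx hx1 hy hy1 hxy1⟩
end

section
/- For a real quadratically closed field R, the Milnor K-group K_n^M(R) decomposes as the direct sum of the subgroup generated by the symbol {−1, …, −1} and the subgroup K_n^M(R)^0 generated by symbols {x₁, …, x_n} with all x_i > 0, and K_n^M(R)^0 is 2-divisible; moreover K_n^M(R)^0 = 2·K_n^M(R). -/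
variable (R : Type) [Field R] [LinearOrder R] [IsStrictOrderedRing R]

/-- The Steinberg relation on the tensor algebra `T(R^×)` over `ℤ`: the generators
`a ⊗ (1-a)` of the defining ideal of Milnor K-theory are identified with `0`. -/
def steinbergRel (a b : TensorAlgebra ℤ (Additive Rˣ)) : Prop :=
  ∃ u v : Rˣ, (u : R) + (v : R) = 1 ∧
    a = TensorAlgebra.ι ℤ (Additive.ofMul u) * TensorAlgebra.ι ℤ (Additive.ofMul v) ∧
    b = 0

/-- The Milnor K-theory ring `K_•^M(R) = T(R^×)/J`. -/
abbrev MilnorKRing := RingQuot (steinbergRel R)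

/-- The symbol `{a₁, …, aₙ}`, the image of `a₁ ⊗ ⋯ ⊗ aₙ` in `K_n^M(R)`. -/
noncomputable def milnorSymbol {n : ℕ} (f : Fin n → Rˣ) : MilnorKRing R :=
  RingQuot.mkRingHom (steinbergRel R)
    (List.ofFn fun i => TensorAlgebra.ι ℤ (Additive.ofMul (f i))).prod

/-- `K_n^M(R)`, the subgroup generated by all `n`-fold symbols. -/
noncomputable def MilnorK (n : ℕ) : AddSubgroup (MilnorKRing R) :=
  AddSubgroup.closure {z | ∃ f : Fin n → Rˣ, z = milnorSymbol R f}

/-- The subgroup generated by the symbol `{-1, …, -1}`. -/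
noncomputable def MilnorKNegOne (n : ℕ) : AddSubgroup (MilnorKRing R) :=
  AddSubgroup.closure {milnorSymbol R (fun _ : Fin n => -1)}

/-- `K_n^M(R)⁰`, the subgroup generated by symbols `{x₁, …, xₙ}` with all `xᵢ > 0`. -/
noncomputable def MilnorKPos (n : ℕ) : AddSubgroup (MilnorKRing R) :=
  AddSubgroup.closure
    {z | ∃ f : Fin n → Rˣ, (∀ i, (0 : R) < (f i : R)) ∧ z = milnorSymbol R f}

noncomputable def theta (u : Rˣ) : MilnorKRing R :=
  RingQuot.mkRingHom (steinbergRel R) (TensorAlgebra.ι ℤ (Additive.ofMul u))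

lemma theta_mul (u v : Rˣ) : theta R (u * v) = theta R u + theta R v := by
  unfold theta
  rw [← map_add, ← map_add, ← ofMul_mul]

lemma theta_one : theta R 1 = 0 := by
  have := theta_mul R 1 1
  simpa using this.symm

lemma theta_inv (u : Rˣ) : theta R u⁻¹ = - theta R u := by
  have := theta_mul R u u⁻¹
  rw [mul_inv_cancel, theta_one] at this
  exact eq_neg_of_add_eq_zero_right this.symm

lemma steinberg (u v : Rˣ) (h : (u : R) + (v : R) = 1) :
    theta R u * theta R v = 0 := by
  unfold theta
  rw [← map_mul]
  rw [show (0 : MilnorKRing R) = RingQuot.mkRingHom (steinbergRel R) 0 from (map_zero _).symm]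
  exact RingQuot.mkRingHom_rel ⟨u, v, h, rfl, rfl⟩


section Bridge
variable {R}
lemma mb_mul_add (x y z : MilnorKRing R) : x * (y + z) = x * y + x * z := mul_add x y z
lemma mb_add_mul (x y z : MilnorKRing R) : (x + y) * z = x * z + y * z := add_mul x y z
lemma mb_neg_mul (x y : MilnorKRing R) : -x * y = -(x * y) := neg_mul x y
lemma mb_mul_neg (x y : MilnorKRing R) : x * -y = -(x * y) := mul_neg x y
lemma mb_zero_mul (x : MilnorKRing R) : (0 : MilnorKRing R) * x = 0 := zero_mul x
lemma mb_mul_zero (x : MilnorKRing R) : x * (0 : MilnorKRing R) = 0 := mul_zero x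
lemma mb_one_mul (x : MilnorKRing R) : (1 : MilnorKRing R) * x = x := one_mul x
lemma mb_mul_one (x : MilnorKRing R) : x * (1 : MilnorKRing R) = x := mul_one x
lemma mb_mul_assoc (x y z : MilnorKRing R) : x * y * z = x * (y * z) := mul_assoc x y z
lemma mb_neg_zero : -(0 : MilnorKRing R) = 0 := neg_zero
lemma mb_add_zero (x : MilnorKRing R) : x + 0 = x := add_zero x
lemma mb_zero_add (x : MilnorKRing R) : 0 + x = x := zero_add x
lemma mb_neg_neg (x : MilnorKRing R) : - -x = x := neg_neg x
lemma mb_smul_mul (c : ℤ) (x y : MilnorKRing R) : (c • x) * y = c • (x * y) := smul_mul_assoc c x y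
lemma mb_mul_smul (c : ℤ) (x y : MilnorKRing R) : x * (c • y) = c • (x * y) := mul_smul_comm c x y
lemma mb_nsmul_mul (c : ℕ) (x y : MilnorKRing R) : (c • x) * y = c • (x * y) := smul_mul_assoc c x y
lemma mb_mul_nsmul (c : ℕ) (x y : MilnorKRing R) : x * (c • y) = c • (x * y) := mul_smul_comm c x y
lemma mb_two_smul (x : MilnorKRing R) : (2 : ℕ) • x = x + x := two_smul ℕ x
lemma mb_smul_zero (c : ℤ) : c • (0 : MilnorKRing R) = 0 := smul_zero c
lemma mb_nsmul_zero (c : ℕ) : c • (0 : MilnorKRing R) = 0 := smul_zero c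
end Bridge

lemma theta_neg_self (a : Rˣ) : theta R a * theta R (-a) = 0 := by
  by_cases h1 : a = 1
  · subst h1; rw [theta_one, zero_mul]
  · have ha0 : (a : R) ≠ 0 := a.ne_zero
    have ha1 : (a : R) ≠ 1 := fun h => h1 (Units.ext h)
    have hw1 : (1 : R) - (a : R) ≠ 0 := sub_ne_zero.mpr (Ne.symm ha1)
    have hw2 : (1 : R) - ((a : R)⁻¹) ≠ 0 := by
      intro h
      apply ha1
      have : (a : R)⁻¹ = 1 := by linarith [sub_eq_zero.mp h]
      field_simp at this
      simp [this]
    set w1 : Rˣ := Units.mk0 (1 - (a : R)) hw1 with hw1def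
    set w2 : Rˣ := Units.mk0 (1 - ((a : R)⁻¹)) hw2 with hw2def
    have hneg : -a = w1 * w2⁻¹ := by
      apply Units.ext
      push_cast
      rw [hw1def, hw2def]
      simp only [Units.val_mk0, Units.val_neg]
      rw [eq_mul_inv_iff_mul_eq₀ hw2]
      field_simp
      ring
    have hst1 : theta R a * theta R w1 = 0 := by
      apply steinberg
      simp [hw1def]
    have hst2 : theta R a * theta R w2 = 0 := by
      have hinv : theta R a = - theta R a⁻¹ := by
        rw [theta_inv]; simp
      have h0 : theta R a⁻¹ * theta R w2 = 0 := by
        apply steinberg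
        simp [hw2def]
      rw [hinv, mb_neg_mul, h0, mb_neg_zero]
    rw [hneg, theta_mul, theta_inv, mb_mul_add, mb_mul_neg, hst1, hst2, mb_neg_zero, mb_add_zero]

lemma theta_neg (a : Rˣ) : theta R (-a) = theta R (-1) + theta R a := by
  rw [← theta_mul, neg_one_mul]

lemma theta_anticomm (a b : Rˣ) : theta R a * theta R b = - (theta R b * theta R a) := by
  have hab := theta_neg_self R (a * b)
  have ha := theta_neg_self R a
  have hb := theta_neg_self R b
  rw [theta_neg] at hab ha hb
  rw [theta_mul] at hab
  have expand : (theta R a + theta R b) * (theta R (-1) + (theta R a + theta R b)) =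
      theta R a * (theta R (-1) + theta R a) + theta R b * (theta R (-1) + theta R b)
        + (theta R a * theta R b + theta R b * theta R a) := by noncomm_ring
  rw [expand, ha, hb] at hab
  simp only [zero_add] at hab
  linear_combination (norm := noncomm_ring) hab

lemma theta_sq (a : Rˣ) : theta R (-1) * theta R a = theta R a * theta R a := by
  have ha := theta_neg_self R a
  rw [theta_neg, mul_add] at ha
  have h2 := theta_anticomm R a (-1)
  linear_combination (norm := noncomm_ring) h2 - ha

noncomputable def wsym (l : List Rˣ) : MilnorKRing R := (l.map (theta R)).prod

lemma wsym_nil : wsym R [] = 1 := rfl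

lemma wsym_cons (a : Rˣ) (l : List Rˣ) : wsym R (a :: l) = theta R a * wsym R l := by
  simp [wsym]

lemma wsym_append (l₁ l₂ : List Rˣ) : wsym R (l₁ ++ l₂) = wsym R l₁ * wsym R l₂ := by
  induction l₁ with
  | nil => rw [wsym_nil, List.nil_append, mb_one_mul]
  | cons a l ih => rw [List.cons_append, wsym_cons, wsym_cons, ih, mb_mul_assoc]

lemma mk_prod_eq_wsym (l : List Rˣ) :
    RingQuot.mkRingHom (steinbergRel R)
      ((l.map fun u => TensorAlgebra.ι ℤ (Additive.ofMul u)).prod) = wsym R l := by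
  induction l with
  | nil => simp [wsym_nil]
  | cons a l ih =>
    rw [List.map_cons, List.prod_cons]
    have : RingQuot.mkRingHom (steinbergRel R)
        (TensorAlgebra.ι ℤ (Additive.ofMul a) * (l.map fun u => TensorAlgebra.ι ℤ (Additive.ofMul u)).prod)
        = theta R a * RingQuot.mkRingHom (steinbergRel R)
            ((l.map fun u => TensorAlgebra.ι ℤ (Additive.ofMul u)).prod) := map_mul _ _ _
    rw [this, ih, wsym_cons]

lemma milnorSymbol_eq_wsym {n : ℕ} (f : Fin n → Rˣ) :
    milnorSymbol R f = wsym R (List.ofFn f) := by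
  rw [← mk_prod_eq_wsym, milnorSymbol, List.map_ofFn]
  rfl

lemma mb_two_zsmul (x : MilnorKRing R) : (2 : ℤ) • x = x + x := two_smul ℤ x

lemma theta_mul_wsym_cons (b a : Rˣ) (m : List Rˣ) :
    theta R b * wsym R (a :: m) = - wsym R (a :: b :: m) := by
  rw [wsym_cons, wsym_cons, wsym_cons, ← mb_mul_assoc, theta_anticomm, mb_neg_mul, mb_mul_assoc]

lemma wsym_extract (a : Rˣ) (l₁ l₂ : List Rˣ) :
    wsym R (l₁ ++ a :: l₂) = wsym R (a :: (l₁ ++ l₂)) ∨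
    wsym R (l₁ ++ a :: l₂) = - wsym R (a :: (l₁ ++ l₂)) := by
  induction l₁ with
  | nil => left; rfl
  | cons b l ih =>
    rw [List.cons_append, wsym_cons]
    rcases ih with h | h
    · right
      rw [h, theta_mul_wsym_cons]
      rfl
    · left
      rw [h, mb_mul_neg, theta_mul_wsym_cons, mb_neg_neg]
      rfl

lemma exists_sqrt_unit (hRQC : ∀ x : R, 0 < x → ∃ a : R, a ^ 2 = x)
    (p : Rˣ) (hp : (0 : R) < (p : R)) : ∃ q : Rˣ, (0 : R) < (q : R) ∧ q * q = p := by
  obtain ⟨a, ha⟩ := hRQC (p : R) hp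
  have ha0 : a ≠ 0 := by
    intro h
    rw [h] at ha
    simp at ha
    exact absurd ha.symm (ne_of_gt hp)
  have hb : |a| ^ 2 = (p : R) := by rw [sq_abs]; exact ha
  have hbpos : (0 : R) < |a| := abs_pos.mpr ha0
  refine ⟨Units.mk0 |a| (ne_of_gt hbpos), hbpos, ?_⟩
  apply Units.ext
  push_cast
  simp only [Units.val_mk0]
  rw [← sq]
  exact hb

lemma negone_sq_reduce (q : Rˣ) (m : List Rˣ) :
    wsym R (-1 :: (q * q) :: m) = (2 : ℤ) • wsym R (q :: q :: m) := by
  have h2 : theta R (q * q) = (2 : ℤ) • theta R q := by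
    rw [theta_mul, mb_two_zsmul]
  rw [wsym_cons, wsym_cons, wsym_cons, wsym_cons, h2, mb_smul_mul, mb_mul_smul,
    ← mb_mul_assoc, theta_sq, mb_mul_assoc]

lemma pos_list_mem (l : List Rˣ) (h : ∀ a ∈ l, (0 : R) < (a : R)) :
    wsym R l ∈ MilnorKPos R l.length := by
  apply AddSubgroup.subset_closure
  refine ⟨l.get, fun i => h _ (l.get_mem i), ?_⟩
  rw [milnorSymbol_eq_wsym]
  congr
  exact (List.ofFn_get l).symm

lemma reduce_mem (hRQC : ∀ x : R, 0 < x → ∃ a : R, a ^ 2 = x) (k : ℕ) :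
    ∀ l : List Rˣ, (∀ a ∈ l, a = -1 ∨ (0 : R) < (a : R)) →
      (∃ a ∈ l, (0 : R) < (a : R)) →
      l.countP (fun a => decide (a = -1)) = k →
      wsym R l ∈ MilnorKPos R l.length := by
  induction k with
  | zero =>
    intro l hmem _ hcount
    apply pos_list_mem
    intro a ha
    rcases hmem a ha with h | h
    · exfalso
      have := List.countP_eq_zero.mp hcount a ha
      simp [h] at this
    · exact h
  | succ k ih =>
    intro l hmem hpos hcount
    have hneg : ∃ a ∈ l, a = (-1 : Rˣ) := by
      have : 0 < l.countP (fun a => decide (a = -1)) := by omega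
      obtain ⟨a, ha, hd⟩ := List.countP_pos_iff.mp this
      exact ⟨a, ha, by simpa using hd⟩
    obtain ⟨a, hal, rfl⟩ := hneg
    obtain ⟨s, t, rfl⟩ := List.append_of_mem hal
    -- positive element is in s ++ t
    obtain ⟨x, hxl, hx⟩ := hpos
    have hxne : x ≠ (-1 : Rˣ) := by
      intro h
      rw [h] at hx
      simp only [Units.val_neg, Units.val_one] at hx
      linarith
    have hxst : x ∈ s ++ t := by
      rcases List.mem_append.mp hxl with h | h
      · exact List.mem_append.mpr (Or.inl h)
      · rcases List.mem_cons.mp h with h | h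
        · exact absurd h hxne
        · exact List.mem_append.mpr (Or.inr h)
    obtain ⟨s', t', hst⟩ := List.append_of_mem hxst
    obtain ⟨q, hqpos, hqq⟩ := exists_sqrt_unit R hRQC x hx
    have hqne : q ≠ (-1 : Rˣ) := by
      intro h
      rw [h] at hqpos
      simp only [Units.val_neg, Units.val_one] at hqpos
      linarith
    -- the new list
    set L : List Rˣ := q :: q :: (s' ++ t') with hL
    have hlen : L.length = (s ++ -1 :: t).length := by
      have h1 : (s ++ t).length = (s' ++ x :: t').length := by rw [hst]
      simp only [hL, List.length_cons, List.length_append] at *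
      omega
    have hLmem : ∀ a ∈ L, a = -1 ∨ (0 : R) < (a : R) := by
      intro a ha
      rcases List.mem_cons.mp ha with h | h
      · right; rw [h]; exact hqpos
      · rcases List.mem_cons.mp h with h | h
        · right; rw [h]; exact hqpos
        · apply hmem
          have h1 : a ∈ s' ++ x :: t' := by
            rcases List.mem_append.mp h with h | h
            · exact List.mem_append.mpr (Or.inl h)
            · exact List.mem_append.mpr (Or.inr (List.mem_cons_of_mem _ h))
          rw [← hst] at h1
          rcases List.mem_append.mp h1 with h | h
          · exact List.mem_append.mpr (Or.inl h)
          · exact List.mem_append.mpr (Or.inr (List.mem_cons_of_mem _ h))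
    have hLpos : ∃ a ∈ L, (0 : R) < (a : R) := ⟨q, List.mem_cons_self, hqpos⟩
    have hLcount : L.countP (fun a => decide (a = -1)) = k := by
      have hx' : (decide (x = (-1 : Rˣ))) = false := by simp [hxne]
      have hq' : (decide (q = (-1 : Rˣ))) = false := by simp [hqne]
      have h0 : (s ++ -1 :: t).countP (fun a => decide (a = -1)) = k + 1 := hcount
      rw [List.countP_append, List.countP_cons] at h0
      simp only [decide_eq_true_eq, if_pos rfl, if_true] at h0
      have h1 : (s ++ t).countP (fun a => decide (a = -1)) = k := by
        rw [List.countP_append]; omega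
      rw [hst, List.countP_append, List.countP_cons, hx'] at h1
      simp only [Bool.false_eq_true, if_false, add_zero, List.countP_append] at h1
      simp [hL, List.countP_cons, List.countP_append, hq']
      omega
    have hLin : wsym R L ∈ MilnorKPos R L.length := ih L hLmem hLpos hLcount
    rw [hlen] at hLin
    -- now relate wsym (s ++ -1 :: t) to wsym L
    have key : wsym R (-1 :: (s ++ t)) ∈ MilnorKPos R (s ++ -1 :: t).length := by
      have e2 := wsym_extract R x s' t'
      rw [← hst] at e2
      have expand : ∀ ε : Bool, True := fun _ => trivial
      have hqqx : wsym R (-1 :: x :: (s' ++ t')) = (2 : ℤ) • wsym R L := by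
        rw [hL, ← hqq]
        exact negone_sq_reduce R q (s' ++ t')
      rcases e2 with h | h
      · have : wsym R (-1 :: (s ++ t)) = (2 : ℤ) • wsym R L := by
          rw [wsym_cons, h, ← wsym_cons, hqqx]
        rw [this]
        exact AddSubgroup.zsmul_mem _ hLin 2
      · have : wsym R (-1 :: (s ++ t)) = -((2 : ℤ) • wsym R L) := by
          rw [wsym_cons, h, mb_mul_neg, ← wsym_cons, hqqx]
        rw [this]
        exact AddSubgroup.neg_mem _ (AddSubgroup.zsmul_mem _ hLin 2)
    rcases wsym_extract R (-1) s t with h | h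
    · rw [h]; exact key
    · rw [h]; exact AddSubgroup.neg_mem _ key

lemma good_word_mem (hRQC : ∀ x : R, 0 < x → ∃ a : R, a ^ 2 = x) (l : List Rˣ)
    (hl : ∀ b ∈ l, b = -1 ∨ (0 : R) < (b : R)) :
    wsym R l ∈ MilnorKNegOne R l.length ⊔ MilnorKPos R l.length := by
  by_cases hpos : ∃ b ∈ l, (0 : R) < (b : R)
  · exact AddSubgroup.mem_sup_right (reduce_mem R hRQC _ l hl hpos rfl)
  · have hall : ∀ b ∈ l, b = (-1 : Rˣ) := by
      intro b hb
      rcases hl b hb with h | h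
      · exact h
      · exact absurd ⟨b, hb, h⟩ hpos
    have hrep : l = List.replicate l.length (-1 : Rˣ) := List.eq_replicate_of_mem hall
    apply AddSubgroup.mem_sup_left
    apply AddSubgroup.subset_closure
    rw [Set.mem_singleton_iff, milnorSymbol_eq_wsym, List.ofFn_const, ← hrep]

lemma cons_word_mem (hRQC : ∀ x : R, 0 < x → ∃ a : R, a ^ 2 = x) (a : Rˣ) (l : List Rˣ)
    (hl : ∀ b ∈ l, b = -1 ∨ (0 : R) < (b : R)) :
    wsym R (a :: l) ∈ MilnorKNegOne R (l.length + 1) ⊔ MilnorKPos R (l.length + 1) := by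
  rcases lt_trichotomy (a : R) 0 with ha | ha | ha
  · -- a negative : a = (-1) * (-a)
    have hna : (0 : R) < ((-a : Rˣ) : R) := by
      rw [Units.val_neg]; linarith
    have hsplit : wsym R (a :: l) = wsym R (-1 :: l) + wsym R ((-a) :: l) := by
      rw [wsym_cons, wsym_cons, wsym_cons, ← mb_add_mul, ← theta_mul]
      congr 2
      simp
    rw [hsplit]
    apply AddSubgroup.add_mem
    · have := good_word_mem R hRQC (-1 :: l) ?_
      · simpa using this
      · intro b hb
        rcases List.mem_cons.mp hb with h | h
        · left; exact h
        · exact hl b h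
    · have := good_word_mem R hRQC ((-a) :: l) ?_
      · simpa using this
      · intro b hb
        rcases List.mem_cons.mp hb with h | h
        · right; rw [h]; exact hna
        · exact hl b h
  · exact absurd ha a.ne_zero
  · have := good_word_mem R hRQC (a :: l) ?_
    · simpa using this
    · intro b hb
      rcases List.mem_cons.mp hb with h | h
      · right; rw [h]; exact ha
      · exact hl b h

lemma word_mem_sup (hRQC : ∀ x : R, 0 < x → ∃ a : R, a ^ 2 = x) :
    ∀ l : List Rˣ, wsym R l ∈ MilnorKNegOne R l.length ⊔ MilnorKPos R l.length := by
  intro l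
  induction l with
  | nil =>
    apply AddSubgroup.mem_sup_left
    apply AddSubgroup.subset_closure
    rw [Set.mem_singleton_iff, milnorSymbol_eq_wsym]
    rfl
  | cons a l ih =>
    rw [wsym_cons]
    -- show θ a * (sup at level l.length) ⊆ sup at level l.length + 1
    have hsup : MilnorKNegOne R l.length ⊔ MilnorKPos R l.length =
        AddSubgroup.closure ({milnorSymbol R (fun _ : Fin l.length => -1)} ∪
          {z | ∃ f : Fin l.length → Rˣ, (∀ i, (0 : R) < (f i : R)) ∧ z = milnorSymbol R f}) := by
      rw [AddSubgroup.closure_union]; rfl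
    rw [hsup] at ih
    clear hsup
    refine AddSubgroup.closure_induction
      (p := fun z _ => theta R a * z ∈
        MilnorKNegOne R (l.length + 1) ⊔ MilnorKPos R (l.length + 1)) ?_ ?_ ?_ ?_ ih
    · intro x hx
      rcases hx with hx | hx
      · rw [Set.mem_singleton_iff] at hx
        subst hx
        rw [milnorSymbol_eq_wsym, List.ofFn_const, ← wsym_cons]
        have := cons_word_mem R hRQC a (List.replicate l.length (-1)) ?_
        · simpa using this
        · intro b hb
          left
          exact List.eq_of_mem_replicate hb
      · obtain ⟨f, hf, rfl⟩ := hx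
        rw [milnorSymbol_eq_wsym, ← wsym_cons]
        have := cons_word_mem R hRQC a (List.ofFn f) ?_
        · simpa using this
        · intro b hb
          right
          obtain ⟨i, rfl⟩ := List.mem_ofFn.mp hb
          exact hf i
    · show theta R a * 0 ∈ _
      rw [mb_mul_zero]
      exact AddSubgroup.zero_mem _
    · intro x y _ _ hx hy
      show theta R a * (x + y) ∈ _
      rw [mb_mul_add]
      exact AddSubgroup.add_mem _ hx hy
    · intro x _ hx
      show theta R a * (-x) ∈ _
      rw [mb_mul_neg]
      exact AddSubgroup.neg_mem _ hx

lemma sup_eq_K (hRQC : ∀ x : R, 0 < x → ∃ a : R, a ^ 2 = x) (n : ℕ) :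
    MilnorKNegOne R n ⊔ MilnorKPos R n = MilnorK R n := by
  apply le_antisymm
  · apply sup_le
    · apply AddSubgroup.closure_mono
      intro z hz
      rw [Set.mem_singleton_iff] at hz
      exact ⟨_, hz⟩
    · apply AddSubgroup.closure_mono
      rintro z ⟨f, _, hzf⟩
      exact ⟨f, hzf⟩
  · rw [MilnorK]
    rw [AddSubgroup.closure_le]
    rintro z ⟨f, rfl⟩
    have := word_mem_sup R hRQC (List.ofFn f)
    rw [milnorSymbol_eq_wsym]
    simpa using this

noncomputable def sgnHom : Additive Rˣ →+ ZMod 2 where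
  toFun u := if ((Additive.toMul u : Rˣ) : R) < 0 then 1 else 0
  map_zero' := by
    have : ¬ ((1 : R) < 0) := by norm_num
    simp [this]
  map_add' := fun u v => by
    have hab : (Additive.toMul (u + v) : Rˣ) = Additive.toMul u * Additive.toMul v := rfl
    set a : Rˣ := Additive.toMul u with hadef
    set b : Rˣ := Additive.toMul v with hbdef
    simp only [hab, Units.val_mul]
    rcases lt_or_gt_of_ne a.ne_zero with h1 | h1 <;>
      rcases lt_or_gt_of_ne b.ne_zero with h2 | h2
    · rw [if_pos h1, if_pos h2, if_neg (not_lt.mpr (le_of_lt (mul_pos_of_neg_of_neg h1 h2)))]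
      decide
    · rw [if_pos h1, if_neg (not_lt.mpr (le_of_lt h2)),
        if_pos (mul_neg_of_neg_of_pos h1 h2)]
      decide
    · rw [if_neg (not_lt.mpr (le_of_lt h1)), if_pos h2,
        if_pos (mul_neg_of_pos_of_neg h1 h2)]
      decide
    · rw [if_neg (not_lt.mpr (le_of_lt h1)), if_neg (not_lt.mpr (le_of_lt h2)),
        if_neg (not_lt.mpr (le_of_lt (mul_pos h1 h2)))]
      decide

noncomputable def phiAux : TensorAlgebra ℤ (Additive Rˣ) →+* ZMod 2 :=
  (TensorAlgebra.lift ℤ (sgnHom R).toIntLinearMap).toRingHom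

lemma phiAux_ι (u : Rˣ) :
    phiAux R (TensorAlgebra.ι ℤ (Additive.ofMul u)) = if (u : R) < 0 then 1 else 0 := by
  have := TensorAlgebra.lift_ι_apply (R := ℤ) ((sgnHom R).toIntLinearMap) (Additive.ofMul u)
  exact this

lemma phiAux_rel {x y : TensorAlgebra ℤ (Additive Rˣ)} (h : steinbergRel R x y) :
    phiAux R x = phiAux R y := by
  obtain ⟨u, v, huv, rfl, rfl⟩ := h
  rw [map_mul, map_zero, phiAux_ι, phiAux_ι]
  by_cases hu : (u : R) < 0
  · have hv : ¬ ((v : R) < 0) := by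
      intro hv
      have : (u : R) + (v : R) < 0 := by linarith
      rw [huv] at this
      norm_num at this
    rw [if_pos hu, if_neg hv, mul_zero]
  · rw [if_neg hu, zero_mul]

noncomputable def phi : MilnorKRing R →+* ZMod 2 :=
  RingQuot.lift ⟨phiAux R, fun _ _ h => phiAux_rel R h⟩

lemma phi_theta (u : Rˣ) : phi R (theta R u) = if (u : R) < 0 then 1 else 0 := by
  rw [theta, phi, RingQuot.lift_mkRingHom_apply, phiAux_ι]

lemma phi_wsym (l : List Rˣ) :
    phi R (wsym R l) = (l.map fun u : Rˣ => if (u : R) < 0 then (1 : ZMod 2) else 0).prod := by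
  induction l with
  | nil =>
    rw [wsym_nil, List.map_nil, List.prod_nil]
    exact map_one _
  | cons a l ih =>
    rw [wsym_cons, List.map_cons, List.prod_cons, ← ih, ← phi_theta]
    exact map_mul _ _ _

lemma phi_negOne_symbol (n : ℕ) : phi R (milnorSymbol R (fun _ : Fin n => -1)) = 1 := by
  rw [milnorSymbol_eq_wsym, List.ofFn_const, phi_wsym]
  have hneg : ((-1 : Rˣ) : R) < 0 := by
    simp only [Units.val_neg, Units.val_one]
    norm_num
  have hmap : (List.replicate n (-1 : Rˣ)).map
      (fun u : Rˣ => if (u : R) < 0 then (1 : ZMod 2) else 0) = List.replicate n 1 := by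
    rw [List.map_replicate, if_pos hneg]
  rw [hmap, List.prod_replicate, one_pow]

lemma phi_pos_zero (n : ℕ) (hn : 1 ≤ n) (f : Fin n → Rˣ) (hf : ∀ i, (0 : R) < (f i : R)) :
    phi R (milnorSymbol R f) = 0 := by
  rw [milnorSymbol_eq_wsym, phi_wsym]
  apply List.prod_eq_zero
  refine List.mem_map.mpr ⟨f ⟨0, hn⟩, ?_, ?_⟩
  · apply List.mem_ofFn.mpr
    exact ⟨⟨0, hn⟩, rfl⟩
  · rw [if_neg (not_lt.mpr (le_of_lt (hf _)))]

section MoreBridges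
variable {R}
lemma mb_two_nsmul (x : MilnorKRing R) : (2 : ℕ) • x = x + x := two_smul ℕ x
lemma mb_nsmul_add (x y : MilnorKRing R) : (2 : ℕ) • (x + y) = (2 : ℕ) • x + (2 : ℕ) • y :=
  smul_add 2 x y
lemma mb_nsmul_neg (x : MilnorKRing R) : (2 : ℕ) • (-x) = -((2 : ℕ) • x) := smul_neg 2 x
lemma mb_nsmul_zero' : (2 : ℕ) • (0 : MilnorKRing R) = 0 := smul_zero 2
lemma mb_phi_add (x y : MilnorKRing R) : phi R (x + y) = phi R x + phi R y := map_add _ x y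
lemma mb_phi_neg (x : MilnorKRing R) : phi R (-x) = -(phi R x) := map_neg _ x
lemma mb_phi_zero : phi R (0 : MilnorKRing R) = 0 := map_zero _
lemma mb_phi_zsmul (c : ℤ) (x : MilnorKRing R) : phi R (c • x) = c • phi R x := map_zsmul _ c x
lemma mb_mul_zsmul (c d : ℤ) (x : MilnorKRing R) : (c * d) • x = c • (d • x) := mul_smul c d x
lemma mb_zsmul_zero (c : ℤ) : c • (0 : MilnorKRing R) = 0 := smul_zero c
lemma mb_zsmul_comm (c d : ℤ) (x : MilnorKRing R) : c • (d • x) = d • (c • x) :=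
  smul_comm c d x
lemma mb_nsmul_zsmul_comm (c : ℤ) (x : MilnorKRing R) :
    (2 : ℕ) • (c • x) = c • ((2 : ℕ) • x) := smul_comm 2 c x
end MoreBridges

lemma negOne_symbol_add_self (n : ℕ) (hn : 1 ≤ n) :
    milnorSymbol R (fun _ : Fin n => -1) + milnorSymbol R (fun _ : Fin n => -1) = 0 := by
  obtain ⟨k, rfl⟩ : ∃ k, n = k + 1 := ⟨n - 1, by omega⟩
  rw [milnorSymbol_eq_wsym, List.ofFn_const, List.replicate_succ, wsym_cons, ← mb_add_mul,
    ← theta_mul]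
  have h1 : ((-1 : Rˣ) * -1) = 1 := by simp
  rw [h1, theta_one, mb_zero_mul]

lemma pos_le_K (n : ℕ) : MilnorKPos R n ≤ MilnorK R n := by
  apply AddSubgroup.closure_mono
  rintro z ⟨f, _, hzf⟩
  exact ⟨f, hzf⟩

lemma pos_two_div (hRQC : ∀ x : R, 0 < x → ∃ a : R, a ^ 2 = x) (n : ℕ) (hn : 1 ≤ n) :
    ∀ z ∈ MilnorKPos R n, ∃ w ∈ MilnorKPos R n, z = 2 • w := by
  intro z hz
  refine AddSubgroup.closure_induction
    (p := fun z _ => ∃ w ∈ MilnorKPos R n, z = 2 • w) ?_ ?_ ?_ ?_ hz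
  · rintro x ⟨f, hf, rfl⟩
    obtain ⟨k, rfl⟩ : ∃ k, n = k + 1 := ⟨n - 1, by omega⟩
    obtain ⟨q, hq, hqq⟩ := exists_sqrt_unit R hRQC (f 0) (hf 0)
    have hofn : List.ofFn f = (f 0) :: List.ofFn (fun i : Fin k => f i.succ) :=
      List.ofFn_succ (f := f)
    have hred : milnorSymbol R f = 2 • wsym R (q :: List.ofFn (fun i : Fin k => f i.succ)) := by
      rw [milnorSymbol_eq_wsym, hofn, ← hqq, wsym_cons, wsym_cons, theta_mul, mb_add_mul,
        mb_two_nsmul]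
    refine ⟨wsym R (q :: List.ofFn (fun i : Fin k => f i.succ)), ?_, hred⟩
    have hmem := pos_list_mem R (q :: List.ofFn (fun i : Fin k => f i.succ)) ?_
    · have hlen : (q :: List.ofFn (fun i : Fin k => f i.succ)).length = k + 1 := by
        simp
      rw [hlen] at hmem
      exact hmem
    · intro b hb
      rcases List.mem_cons.mp hb with h | h
      · rw [h]; exact hq
      · obtain ⟨i, rfl⟩ := List.mem_ofFn.mp h
        exact hf _
  · exact ⟨0, AddSubgroup.zero_mem _, by rw [mb_nsmul_zero']⟩
  · rintro x y _ _ ⟨w1, hw1, rfl⟩ ⟨w2, hw2, rfl⟩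
    exact ⟨w1 + w2, AddSubgroup.add_mem _ hw1 hw2, by rw [mb_nsmul_add]⟩
  · rintro x _ ⟨w, hw, rfl⟩
    exact ⟨-w, AddSubgroup.neg_mem _ hw, by rw [mb_nsmul_neg]⟩

lemma inf_bot (n : ℕ) (hn : 1 ≤ n) : MilnorKNegOne R n ⊓ MilnorKPos R n = ⊥ := by
  rw [eq_bot_iff]
  rintro x ⟨h1, h2⟩
  obtain ⟨c, hc⟩ := AddSubgroup.mem_closure_singleton.mp h1
  have hker : phi R x = 0 := by
    refine AddSubgroup.closure_induction (p := fun z _ => phi R z = 0) ?_ ?_ ?_ ?_ h2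
    · rintro z ⟨f, hf, rfl⟩
      exact phi_pos_zero R n hn f hf
    · exact mb_phi_zero
    · intro a b _ _ ha hb
      show phi R (a + b) = 0
      rw [mb_phi_add, ha, hb, add_zero]
    · intro a _ ha
      show phi R (-a) = 0
      rw [mb_phi_neg, ha, neg_zero]
  have hcast : ((c : ℤ) : ZMod 2) = 0 := by
    have := hker
    rw [← hc, mb_phi_zsmul, phi_negOne_symbol] at this
    simpa using this
  obtain ⟨d, rfl⟩ := (ZMod.intCast_zmod_eq_zero_iff_dvd c 2).mp hcast
  rw [AddSubgroup.mem_bot, ← hc, mb_mul_zsmul, mb_zsmul_comm]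
  have h2m : ((2 : ℕ) : ℤ) • milnorSymbol R (fun _ : Fin n => -1) = 0 := by
    have he : ((2 : ℕ) : ℤ) = (2 : ℤ) := by norm_num
    rw [he, two_smul ℤ]
    exact negOne_symbol_add_self R n hn
  rw [h2m, mb_zsmul_zero]

lemma two_nsmul_negOne_symbol (n : ℕ) (hn : 1 ≤ n) :
    (2 : ℕ) • milnorSymbol R (fun _ : Fin n => -1) = 0 := by
  rw [mb_two_nsmul]
  exact negOne_symbol_add_self R n hn

/-- For a real quadratically closed field `R`, the Milnor K-group `K_n^M(R)` is the direct
sum of the subgroup generated by `{-1, …, -1}` and the subgroup `K_n^M(R)⁰` generated by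
symbols of positive elements; `K_n^M(R)⁰` is 2-divisible, and `K_n^M(R)⁰ = 2·K_n^M(R)`. -/
theorem milnorK_decomposition
    (hRQC : ∀ x : R, 0 < x → ∃ a : R, a ^ 2 = x) (n : ℕ) (hn : 1 ≤ n) :
    (MilnorKNegOne R n ⊔ MilnorKPos R n = MilnorK R n ∧
      MilnorKNegOne R n ⊓ MilnorKPos R n = ⊥) ∧
    (∀ z ∈ MilnorKPos R n, ∃ w ∈ MilnorKPos R n, z = 2 • w) ∧
    (∀ z, z ∈ MilnorKPos R n ↔ ∃ w ∈ MilnorK R n, z = 2 • w) := by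
  refine ⟨⟨sup_eq_K R hRQC n, inf_bot R n hn⟩, pos_two_div R hRQC n hn, fun z => ⟨?_, ?_⟩⟩
  · intro hz
    obtain ⟨w, hw, hzw⟩ := pos_two_div R hRQC n hn z hz
    exact ⟨w, pos_le_K R n hw, hzw⟩
  · rintro ⟨w, hw, rfl⟩
    rw [← sup_eq_K R hRQC n] at hw
    obtain ⟨x, hx, y, hy, rfl⟩ := AddSubgroup.mem_sup.mp hw
    obtain ⟨c, hc⟩ := AddSubgroup.mem_closure_singleton.mp hx
    have h2x : (2 : ℕ) • x = 0 := by
      rw [← hc, mb_nsmul_zsmul_comm, two_nsmul_negOne_symbol R n hn, mb_zsmul_zero]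
    rw [mb_nsmul_add, h2x, mb_zero_add]
    exact AddSubgroup.nsmul_mem _ hy 2
end
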